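/- Let p ≥ 2 and let a₁, a₂ ∈ ℚ with a₁, a₂ > 0. Then the set { -a₁/p^{k₁} - a₂/p^{k₁+k₂} : k₁, k₂ ∈ ℤ, k₁, k₂ ≥ 1 } ⊆ ℚ is well-ordered, and for each γ ∈ ℚ there are at most finitely many pairs (k₁,k₂) ∈ (ℤ≥1)² with γ = -a₁/p^{k₁} - a₂/p^{k₁+k₂}. -/

import Mathlib

/-- For an integer `p ≥ 2` and positive rationals `a₁, a₂`, the set
`{ -a₁/p^{k₁} - a₂/p^{k₁+k₂} : k₁, k₂ ∈ ℤ≥1 }` is well-ordered, and each rational `γ`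
has at most finitely many representations of this form. -/
theorem stmt1 (p : ℤ) (hp : 2 ≤ p) (a₁ a₂ : ℚ) (ha₁ : 0 < a₁) (ha₂ : 0 < a₂) :
    ({x : ℚ | ∃ k₁ k₂ : ℤ, 1 ≤ k₁ ∧ 1 ≤ k₂ ∧
        x = -a₁ / (p : ℚ) ^ k₁ - a₂ / (p : ℚ) ^ (k₁ + k₂)}).IsWF ∧
    ∀ γ : ℚ,
      ({kk : ℤ × ℤ | 1 ≤ kk.1 ∧ 1 ≤ kk.2 ∧
        γ = -a₁ / (p : ℚ) ^ kk.1 - a₂ / (p : ℚ) ^ (kk.1 + kk.2)}).Finite := by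
  have hp1 : (1 : ℚ) < (p : ℚ) := by exact_mod_cast lt_of_lt_of_le one_lt_two hp
  have hp0 : (0 : ℚ) < (p : ℚ) := lt_trans one_pos hp1
  have hzpos : ∀ k : ℤ, (0 : ℚ) < (p : ℚ) ^ k := fun k => zpow_pos hp0 k
  set f : ℤ × ℤ → ℚ := fun kk => -a₁ / (p : ℚ) ^ kk.1 - a₂ / (p : ℚ) ^ (kk.1 + kk.2)
    with hf
  have hmono : Monotone f := by
    intro x y hxy
    have h1 : (p : ℚ) ^ x.1 ≤ (p : ℚ) ^ y.1 := zpow_le_zpow_right₀ hp1.le hxy.1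
    have h2 : (p : ℚ) ^ (x.1 + x.2) ≤ (p : ℚ) ^ (y.1 + y.2) :=
      zpow_le_zpow_right₀ hp1.le (add_le_add hxy.1 hxy.2)
    have A : a₁ / (p : ℚ) ^ y.1 ≤ a₁ / (p : ℚ) ^ x.1 :=
      div_le_div_of_nonneg_left ha₁.le (hzpos _) h1
    have B : a₂ / (p : ℚ) ^ (y.1 + y.2) ≤ a₂ / (p : ℚ) ^ (x.1 + x.2) :=
      div_le_div_of_nonneg_left ha₂.le (hzpos _) h2
    simp only [hf, neg_div]
    linarith
  constructor
  · rw [← Set.isPWO_iff_isWF]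
    have hS : {x : ℚ | ∃ k₁ k₂ : ℤ, 1 ≤ k₁ ∧ 1 ≤ k₂ ∧
        x = -a₁ / (p : ℚ) ^ k₁ - a₂ / (p : ℚ) ^ (k₁ + k₂)}
        = f '' ((Set.Ici 1) ×ˢ (Set.Ici 1)) := by
      ext x
      constructor
      · rintro ⟨k₁, k₂, h1, h2, rfl⟩
        exact ⟨(k₁, k₂), ⟨h1, h2⟩, rfl⟩
      · rintro ⟨⟨k₁, k₂⟩, ⟨h1, h2⟩, rfl⟩
        exact ⟨k₁, k₂, h1, h2, rfl⟩
    rw [hS]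
    have hIci : (Set.Ici (1 : ℤ)).IsPWO := by
      rw [Set.isPWO_iff_isWF]
      exact (bddBelow_Ici).wellFoundedOn_lt
    exact (hIci.prod hIci).image_of_monotone hmono
  · intro γ
    rcases le_or_gt 0 γ with hγ | hγ
    · apply Set.Finite.subset (Set.finite_empty)
      rintro ⟨k₁, k₂⟩ ⟨h1, h2, h3⟩
      have : γ < 0 := by
        rw [h3]
        have := hzpos k₁
        have := hzpos (k₁ + k₂)
        have : 0 < a₁ / (p : ℚ) ^ k₁ := by positivity
        have : 0 < a₂ / (p : ℚ) ^ (k₁ + k₂) := by positivity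
        simp only [neg_div]
        linarith
      exact absurd hγ (not_le.mpr this)
    · -- bound on k₁ : p^{k₁} ≤ (a₁+a₂)/(-γ), hence k₁ ≤ K
      set B : ℚ := (a₁ + a₂) / (-γ) with hB
      have hBpos : 0 < B := div_pos (by linarith) (by linarith)
      set K : ℤ := ⌈B⌉ with hK
      have hfst : ∀ kk : ℤ × ℤ, kk ∈ {kk : ℤ × ℤ | 1 ≤ kk.1 ∧ 1 ≤ kk.2 ∧
          γ = -a₁ / (p : ℚ) ^ kk.1 - a₂ / (p : ℚ) ^ (kk.1 + kk.2)} → kk.1 ≤ K := by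
        rintro ⟨k₁, k₂⟩ ⟨h1, h2, h3⟩
        -- p^{k₁} ≤ B
        have hle : (p : ℚ) ^ (k₁ + k₂) ≥ (p : ℚ) ^ k₁ :=
          zpow_le_zpow_right₀ hp1.le (by linarith)
        have hA : a₂ / (p : ℚ) ^ (k₁ + k₂) ≤ a₂ / (p : ℚ) ^ k₁ :=
          div_le_div_of_nonneg_left ha₂.le (hzpos _) hle
        have hsum : -γ ≤ (a₁ + a₂) / (p : ℚ) ^ k₁ := by
          rw [h3]
          have h4 : -(-a₁ / (p : ℚ) ^ k₁ - a₂ / (p : ℚ) ^ (k₁ + k₂))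
              = a₁ / (p : ℚ) ^ k₁ + a₂ / (p : ℚ) ^ (k₁ + k₂) := by ring
          rw [h4, add_div]
          linarith
        have hpB : (p : ℚ) ^ k₁ ≤ B := by
          rw [hB, le_div_iff₀ (by linarith : (0:ℚ) < -γ)]
          rw [le_div_iff₀ (hzpos k₁)] at hsum
          linarith
        -- k₁ ≤ p^{k₁} in ℚ
        have hkpow : (k₁ : ℚ) ≤ (p : ℚ) ^ k₁ := by
          have hn : k₁ = (k₁.toNat : ℤ) := (Int.toNat_of_nonneg (by linarith)).symm
          rw [hn, zpow_natCast]
          have h2n : (k₁.toNat : ℚ) < 2 ^ k₁.toNat := by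
            exact_mod_cast (Nat.lt_two_pow_self (n := k₁.toNat))
          have : (2 : ℚ) ^ k₁.toNat ≤ (p : ℚ) ^ k₁.toNat :=
            pow_le_pow_left₀ (by norm_num) (by exact_mod_cast hp) _
          push_cast
          linarith
        have : (k₁ : ℚ) ≤ B := le_trans hkpow hpB
        calc k₁ ≤ ⌈(k₁ : ℚ)⌉ := by rw [Int.ceil_intCast]
          _ ≤ K := Int.ceil_le_ceil this
      -- injectivity of fst on the set
      have hinj : Set.InjOn Prod.fst {kk : ℤ × ℤ | 1 ≤ kk.1 ∧ 1 ≤ kk.2 ∧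
          γ = -a₁ / (p : ℚ) ^ kk.1 - a₂ / (p : ℚ) ^ (kk.1 + kk.2)} := by
        rintro ⟨k₁, k₂⟩ ⟨h1, h2, h3⟩ ⟨k₁', k₂'⟩ ⟨h1', h2', h3'⟩ heq
        simp only at heq
        subst heq
        have h4 : a₂ / (p : ℚ) ^ (k₁ + k₂) = a₂ / (p : ℚ) ^ (k₁ + k₂') := by
          rw [h3] at h3'
          linarith [sub_eq_sub_iff_sub_eq_sub.mp h3']
        have h5 : (p : ℚ) ^ (k₁ + k₂) = (p : ℚ) ^ (k₁ + k₂') := by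
          have := div_eq_div_iff (hzpos (k₁ + k₂)).ne' (hzpos (k₁ + k₂')).ne' |>.mp h4
          have ha₂' : a₂ ≠ 0 := ha₂.ne'
          exact (mul_left_cancel₀ ha₂' this).symm
        have h6 : k₁ + k₂ = k₁ + k₂' :=
          zpow_right_injective₀ hp0 (by linarith : (p : ℚ) ≠ 1) h5
        have : k₂ = k₂' := by omega
        simp [this]
      apply Set.Finite.of_finite_image _ hinj
      apply Set.Finite.subset (Set.finite_Icc 1 K)
      rintro x ⟨⟨k₁, k₂⟩, hmem, rfl⟩
      exact ⟨hmem.1, hfst _ hmem⟩
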